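/- Let j : Z ⟶ Y and i : Y ⟶ X be morphisms of locally ringed spaces whose underlying continuous maps are closed topological embeddings and all of whose stalk maps are surjective. If j is a tidy morphism, then the composite i ∘ j : Z ⟶ X is a tidy morphism. -/

import Mathlib

open AlgebraicGeometry CategoryTheory TopologicalSpace Opposite

/-- A morphism of locally ringed spaces is *tidy* if, for every open `U` in the target,
every section `f` over `U` and every point `w` of the source mapping into `U`: if at every
point `w'` mapping into `U` and every `N` the germ of `f` lies in `ker(φ♯_{w'}) + m^N`,
then the germ of `f` at the image of `w` lies in `ker(φ♯_w)`. -/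
def TidyMorphism {W X : LocallyRingedSpace} (φ : W ⟶ X) : Prop :=
  ∀ (U : Opens X) (f : X.presheaf.obj (op U)) (w : W) (hw : φ.base w ∈ U),
    (∀ (w' : W) (hw' : φ.base w' ∈ U) (N : ℕ),
      X.presheaf.germ U (φ.base w') hw' f ∈
        RingHom.ker (φ.stalkMap w').hom +
          (IsLocalRing.maximalIdeal (X.presheaf.stalk (φ.base w'))) ^ N) →
    X.presheaf.germ U (φ.base w) hw f ∈ RingHom.ker (φ.stalkMap w).hom

/-- If `j : Z ⟶ Y` and `i : Y ⟶ X` are closed embeddings of locally ringed spaces (closed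
topological embeddings with surjective stalk maps) and `j` is tidy, then `i ∘ j` is tidy. -/
theorem tidyMorphism_comp {Z Y X : LocallyRingedSpace} (j : Z ⟶ Y) (i : Y ⟶ X)
    (hjemb : Topology.IsClosedEmbedding j.base)
    (hjsurj : ∀ z : Z, Function.Surjective (j.stalkMap z))
    (hiemb : Topology.IsClosedEmbedding i.base)
    (hisurj : ∀ y : Y, Function.Surjective (i.stalkMap y))
    (hj : TidyMorphism j) :
    TidyMorphism (j ≫ i) := by
  intro U f w hw h
  set V : Opens Y := (Opens.map i.base).obj U with hV
  set g : Y.presheaf.obj (op V) := i.c.app (op U) f with hg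
  have key : ∀ (w' : Z) (hw' : (j ≫ i).base w' ∈ U),
      Y.presheaf.germ V (j.base w') hw' g =
        i.stalkMap (j.base w') (X.presheaf.germ U ((j ≫ i).base w') hw' f) :=
    fun w' hw' => (LocallyRingedSpace.stalkMap_germ_apply i U (j.base w') hw' f).symm
  have hcomp : ∀ (w' : Z) (a : X.presheaf.stalk ((j ≫ i).base w')),
      (j ≫ i).stalkMap w' a = j.stalkMap w' (i.stalkMap (j.base w') a) := by
    intro w' a
    rw [LocallyRingedSpace.stalkMap_comp]
    rfl
  have hjV : j.base w ∈ V := hw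
  have main := hj V g w hjV ?_
  · rw [RingHom.mem_ker] at main ⊢
    rw [hcomp w]
    rw [key w hw] at main
    exact main
  · intro w' hw' N
    have h' := h w' hw' N
    obtain ⟨a, ha, b, hb, hab⟩ := Submodule.mem_sup.mp h'
    rw [key w' hw']
    refine Submodule.mem_sup.mpr ⟨i.stalkMap (j.base w') a, ?_, i.stalkMap (j.base w') b, ?_, ?_⟩
    · rw [RingHom.mem_ker] at ha ⊢
      rw [← hcomp w']
      exact ha
    · have hloc : IsLocalRing.maximalIdeal (X.presheaf.stalk ((j ≫ i).base w')) ≤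
          (IsLocalRing.maximalIdeal (Y.presheaf.stalk (j.base w'))).comap
            (i.stalkMap (j.base w')).hom := fun x hx hu =>
              hx ((i.prop (j.base w')).map_nonunit x hu)
      exact (Ideal.pow_right_mono hloc N).trans (Ideal.le_comap_pow _ N) hb
    · refine (map_add (i.stalkMap (j.base w')).hom a b).symm.trans ?_
      exact congrArg _ hab
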